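/- Fix m \ge 0. For n \ge m let I(n,m) = (1/\pi) \int_{\mathbb{C}} (1/|z|^2) \cdot (r_1^2 + r_2^2 - 2 r_{12}^2) / (r_3^2 \sqrt{(r_1+r_2)^2 - 4 r_{12}^2}) \, dA(z), where r_1, r_2, r_3, r_{12} are evaluated at x = |z|^2. Then I(n,m)/n \to 1 as n \to \infty. -/

import Mathlib

open Filter

/-- `aa k x = ∑_{j=0}^k x^j / j!` -/
noncomputable def aa (k : ℕ) (x : ℝ) : ℝ := ∑ j ∈ Finset.range (k + 1), x ^ j / (Nat.factorial j)

/-- `bb k x = ∑_{j=1}^k j x^j / j!` -/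
noncomputable def bb (k : ℕ) (x : ℝ) : ℝ := ∑ j ∈ Finset.Icc 1 k, (j : ℝ) * x ^ j / (Nat.factorial j)

/-- `cc k x = ∑_{j=1}^k j² x^j / j!` -/
noncomputable def cc (k : ℕ) (x : ℝ) : ℝ := ∑ j ∈ Finset.Icc 1 k, (j : ℝ) ^ 2 * x ^ j / (Nat.factorial j)

noncomputable def r3 (n m : ℕ) (x : ℝ) : ℝ := aa n x + aa m x
noncomputable def r12 (n m : ℕ) (x : ℝ) : ℝ := bb n x * bb m x
noncomputable def r1 (n m : ℕ) (x : ℝ) : ℝ := r3 n m x * cc n x - (bb n x) ^ 2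
noncomputable def r2 (n m : ℕ) (x : ℝ) : ℝ := r3 n m x * cc m x - (bb m x) ^ 2

/-- The first-intensity (Kac–Rice) integrand of a Weyl random harmonic polynomial of
bidegree `(n, m)`, evaluated at `z`, with `x = |z|²`. -/
noncomputable def F (n m : ℕ) (z : ℂ) : ℝ :=
  (1 / ‖z‖ ^ 2) *
    (((r1 n m (‖z‖ ^ 2)) ^ 2 + (r2 n m (‖z‖ ^ 2)) ^ 2 - 2 * (r12 n m (‖z‖ ^ 2)) ^ 2) /
      ((r3 n m (‖z‖ ^ 2)) ^ 2 *
        Real.sqrt ((r1 n m (‖z‖ ^ 2) + r2 n m (‖z‖ ^ 2)) ^ 2 - 4 * (r12 n m (‖z‖ ^ 2)) ^ 2)))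

/-- The expected number of zeros in `ℂ`, as given by the Kac–Rice formula. -/
noncomputable def I (n m : ℕ) : ℝ := (1 / Real.pi) * ∫ z : ℂ, F n m z

/- ### Auxiliary development -/

open MeasureTheory Set Topology

section Aux

/-- The one-dimensional integrand: `F n m z = gg n m (‖z‖^2)`. -/
noncomputable def gg (n m : ℕ) (x : ℝ) : ℝ :=
  (1 / x) *
    (((r1 n m x) ^ 2 + (r2 n m x) ^ 2 - 2 * (r12 n m x) ^ 2) /
      ((r3 n m x) ^ 2 * Real.sqrt ((r1 n m x + r2 n m x) ^ 2 - 4 * (r12 n m x) ^ 2)))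

lemma F_eq_gg (n m : ℕ) (z : ℂ) : F n m z = gg n m (‖z‖ ^ 2) := rfl

noncomputable def bbx (k : ℕ) (x : ℝ) : ℝ :=
  ∑ j ∈ Finset.Icc 1 k, (j : ℝ) * x ^ (j - 1) / (Nat.factorial j)
noncomputable def ccx (k : ℕ) (x : ℝ) : ℝ :=
  ∑ j ∈ Finset.Icc 1 k, (j : ℝ) ^ 2 * x ^ (j - 1) / (Nat.factorial j)
noncomputable def HH (n m : ℕ) (x : ℝ) : ℝ := (bb n x + bb m x) / r3 n m x
noncomputable def HD (n m : ℕ) (x : ℝ) : ℝ :=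
  ((ccx n x + ccx m x) * r3 n m x - (bb n x + bb m x) * (bbx n x + bbx m x)) / (r3 n m x) ^ 2

lemma sum_range_split (h : ℕ → ℝ) (k : ℕ) :
    ∑ j ∈ Finset.range (k + 1), h j = h 0 + ∑ j ∈ Finset.Icc 1 k, h j := by
  induction k with
  | zero => simp
  | succ k ih =>
      rw [Finset.sum_range_succ, ih, Finset.sum_Icc_succ_top (by omega : 1 ≤ k + 1)]
      ring

lemma sum_Icc_eq_sum_range' (p : ℕ → ℝ) (k : ℕ) :
    ∑ j ∈ Finset.Icc 1 k, p j = ∑ i ∈ Finset.range k, p (i + 1) := by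
  induction k with
  | zero => simp
  | succ k ih => rw [Finset.sum_Icc_succ_top (by omega : 1 ≤ k + 1), ih, Finset.sum_range_succ]

lemma aa_eq (k : ℕ) (x : ℝ) :
    aa k x = 1 + ∑ j ∈ Finset.Icc 1 k, x ^ j / (Nat.factorial j) := by
  rw [aa, sum_range_split]; simp

lemma one_le_aa (k : ℕ) {x : ℝ} (hx : 0 ≤ x) : 1 ≤ aa k x := by
  rw [aa_eq]
  have : 0 ≤ ∑ j ∈ Finset.Icc 1 k, x ^ j / (Nat.factorial j) :=
    Finset.sum_nonneg fun j _ => div_nonneg (pow_nonneg hx j) (by positivity)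
  linarith

lemma aa_pos (k : ℕ) {x : ℝ} (hx : 0 ≤ x) : 0 < aa k x := lt_of_lt_of_le one_pos (one_le_aa k hx)

lemma aa_mono_k {k l : ℕ} (h : k ≤ l) {x : ℝ} (hx : 0 ≤ x) : aa k x ≤ aa l x := by
  unfold aa
  exact Finset.sum_le_sum_of_subset_of_nonneg
    (Finset.range_subset_range.2 (by omega))
    (fun j _ _ => div_nonneg (pow_nonneg hx j) (by positivity))

lemma bb_nonneg (k : ℕ) {x : ℝ} (hx : 0 ≤ x) : 0 ≤ bb k x :=
  Finset.sum_nonneg fun j _ =>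
    div_nonneg (mul_nonneg (by positivity) (pow_nonneg hx j)) (by positivity)

lemma cc_nonneg (k : ℕ) {x : ℝ} (hx : 0 ≤ x) : 0 ≤ cc k x :=
  Finset.sum_nonneg fun j _ =>
    div_nonneg (mul_nonneg (by positivity) (pow_nonneg hx j)) (by positivity)

lemma two_le_r3 (n m : ℕ) {x : ℝ} (hx : 0 ≤ x) : 2 ≤ r3 n m x := by
  have := one_le_aa n hx; have := one_le_aa m hx; unfold r3; linarith

lemma r3_pos (n m : ℕ) {x : ℝ} (hx : 0 ≤ x) : 0 < r3 n m x := by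
  have := two_le_r3 n m hx; linarith

/-- Cauchy–Schwarz: `bb k x ^ 2 ≤ aa k x * cc k x`. -/
lemma bb_sq_le (k : ℕ) {x : ℝ} (hx : 0 ≤ x) : bb k x ^ 2 ≤ aa k x * cc k x := by
  have cs := Finset.sum_sq_le_sum_mul_sum_of_sq_eq_mul (Finset.Icc 1 k)
    (r := fun j => (j : ℝ) * x ^ j / (Nat.factorial j))
    (f := fun j => x ^ j / (Nat.factorial j))
    (g := fun j => (j : ℝ) ^ 2 * x ^ j / (Nat.factorial j))
    (fun j _ => div_nonneg (pow_nonneg hx j) (by positivity))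
    (fun j _ => div_nonneg (mul_nonneg (by positivity) (pow_nonneg hx j)) (by positivity))
    (fun j _ => by field_simp)
  refine le_trans cs ?_
  have h1 : ∑ j ∈ Finset.Icc 1 k, x ^ j / (Nat.factorial j) ≤ aa k x := by
    rw [aa_eq]; linarith
  exact mul_le_mul_of_nonneg_right h1 (cc_nonneg k hx)

lemma r1_ge (n m : ℕ) {x : ℝ} (hx : 0 ≤ x) : aa m x * cc n x ≤ r1 n m x := by
  have := bb_sq_le n hx; unfold r1 r3; nlinarith

lemma r2_ge (n m : ℕ) {x : ℝ} (hx : 0 ≤ x) : aa n x * cc m x ≤ r2 n m x := by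
  have := bb_sq_le m hx; unfold r2 r3; nlinarith

lemma r1_nonneg (n m : ℕ) {x : ℝ} (hx : 0 ≤ x) : 0 ≤ r1 n m x :=
  le_trans (mul_nonneg (aa_pos m hx).le (cc_nonneg n hx)) (r1_ge n m hx)

lemma r2_nonneg (n m : ℕ) {x : ℝ} (hx : 0 ≤ x) : 0 ≤ r2 n m x :=
  le_trans (mul_nonneg (aa_pos n hx).le (cc_nonneg m hx)) (r2_ge n m hx)

lemma r12_nonneg (n m : ℕ) {x : ℝ} (hx : 0 ≤ x) : 0 ≤ r12 n m x :=
  mul_nonneg (bb_nonneg n hx) (bb_nonneg m hx)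

lemma r12_sq_le (n m : ℕ) {x : ℝ} (hx : 0 ≤ x) : r12 n m x ^ 2 ≤ r1 n m x * r2 n m x := by
  have h1 := r1_ge n m hx
  have h2 := r2_ge n m hx
  have hb1 := bb_sq_le n hx
  have hb2 := bb_sq_le m hx
  have han := aa_pos n hx; have ham := aa_pos m hx
  have hcn := cc_nonneg n hx; have hcm := cc_nonneg m hx
  have key : r12 n m x ^ 2 ≤ (aa m x * cc n x) * (aa n x * cc m x) := by
    unfold r12
    calc (bb n x * bb m x) ^ 2 = bb n x ^ 2 * bb m x ^ 2 := by ring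
    _ ≤ (aa n x * cc n x) * (aa m x * cc m x) := by
        apply mul_le_mul hb1 hb2 (sq_nonneg _) (mul_nonneg han.le hcn)
    _ = (aa m x * cc n x) * (aa n x * cc m x) := by ring
  refine le_trans key ?_
  have h1' : 0 ≤ aa m x * cc n x := mul_nonneg ham.le hcn
  have h2' : 0 ≤ aa n x * cc m x := mul_nonneg han.le hcm
  exact mul_le_mul h1 h2 h2' (r1_nonneg n m hx)

lemma two_r12_le (n m : ℕ) {x : ℝ} (hx : 0 ≤ x) : 2 * r12 n m x ≤ r1 n m x + r2 n m x := by
  have h := r12_sq_le n m hx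
  have h1 := r1_nonneg n m hx
  have h2 := r2_nonneg n m hx
  have h12 := r12_nonneg n m hx
  nlinarith [sq_nonneg (r1 n m x - r2 n m x), sq_nonneg (r1 n m x + r2 n m x - 2 * r12 n m x)]

lemma bb_eq_mul (k : ℕ) (x : ℝ) : bb k x = x * bbx k x := by
  unfold bb bbx
  rw [Finset.mul_sum]
  apply Finset.sum_congr rfl
  intro j hj
  have hj1 : 1 ≤ j := (Finset.mem_Icc.1 hj).1
  have : x ^ j = x * x ^ (j - 1) := by
    conv_lhs => rw [show j = (j - 1) + 1 by omega]
    rw [pow_succ]; ring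
  rw [this]; ring

lemma cc_eq_mul (k : ℕ) (x : ℝ) : cc k x = x * ccx k x := by
  unfold cc ccx
  rw [Finset.mul_sum]
  apply Finset.sum_congr rfl
  intro j hj
  have hj1 : 1 ≤ j := (Finset.mem_Icc.1 hj).1
  have : x ^ j = x * x ^ (j - 1) := by
    conv_lhs => rw [show j = (j - 1) + 1 by omega]
    rw [pow_succ]; ring
  rw [this]; ring

lemma bbx_eq_aa (k : ℕ) (x : ℝ) : bbx (k + 1) x = aa k x := by
  unfold bbx aa
  rw [sum_Icc_eq_sum_range']
  apply Finset.sum_congr rfl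
  intro i _
  have h : ((i + 1 : ℕ) : ℝ) ≠ 0 := by positivity
  rw [Nat.factorial_succ]
  push_cast
  rw [mul_div_mul_left _ _ (by positivity : ((i:ℝ)+1) ≠ 0)]

lemma hasDerivAt_aa (k : ℕ) (x : ℝ) : HasDerivAt (aa k) (bbx k x) x := by
  have : HasDerivAt (aa k)
      (∑ j ∈ Finset.range (k+1), (j : ℝ) * x ^ (j-1) / (Nat.factorial j)) x := by
    apply HasDerivAt.fun_sum
    intro j _
    have h := (hasDerivAt_pow j x).div_const (Nat.factorial j : ℝ)
    simpa using h
  convert this using 1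
  rw [sum_range_split (fun j => (j:ℝ) * x ^ (j-1) / (Nat.factorial j)) k]
  unfold bbx; simp

lemma hasDerivAt_bb (k : ℕ) (x : ℝ) : HasDerivAt (bb k) (ccx k x) x := by
  unfold bb ccx
  apply HasDerivAt.fun_sum
  intro j hj
  have h := ((hasDerivAt_pow j x).const_mul (j : ℝ)).div_const (Nat.factorial j : ℝ)
  have e : (j:ℝ) ^ 2 * x ^ (j - 1) / (Nat.factorial j : ℝ)
      = (j:ℝ) * ((j:ℝ) * x ^ (j - 1)) / (Nat.factorial j : ℝ) := by ring
  rw [e]; exact h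

lemma hasDerivAt_HH (n m : ℕ) {x : ℝ} (hx : 0 ≤ x) : HasDerivAt (HH n m) (HD n m x) x := by
  have hr3 : r3 n m x ≠ 0 := (r3_pos n m hx).ne'
  have h1 := (hasDerivAt_bb n x).add (hasDerivAt_bb m x)
  have h2 := (hasDerivAt_aa n x).add (hasDerivAt_aa m x)
  have h2' : HasDerivAt (r3 n m) (bbx n x + bbx m x) x := h2
  have := h1.div h2' hr3
  exact this

lemma HD_eq (n m : ℕ) {x : ℝ} (hx : 0 < x) :
    HD n m x = (r1 n m x + r2 n m x - 2 * r12 n m x) / (x * (r3 n m x) ^ 2) := by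
  have e1 : r1 n m x + r2 n m x - 2 * r12 n m x
      = x * ((ccx n x + ccx m x) * r3 n m x - (bb n x + bb m x) * (bbx n x + bbx m x)) := by
    unfold r1 r2 r12
    rw [cc_eq_mul n, cc_eq_mul m, bb_eq_mul n, bb_eq_mul m]
    ring
  rw [e1, HD, mul_div_mul_left _ _ hx.ne']

lemma HD_nonneg (n m : ℕ) {x : ℝ} (hx : 0 < x) : 0 ≤ HD n m x := by
  rw [HD_eq n m hx]
  apply div_nonneg
  · have := two_r12_le n m hx.le; linarith
  · positivity

lemma HH_zero (n m : ℕ) : HH n m 0 = 0 := by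
  unfold HH
  rw [bb_eq_mul n, bb_eq_mul m]
  simp

-- term limit
lemma tendsto_term_div_pow (c : ℝ) (j n : ℕ) (h : j ≤ n) :
    Tendsto (fun x : ℝ => c * x ^ j / x ^ n) atTop (𝓝 (if j = n then c else 0)) := by
  rcases eq_or_lt_of_le h with rfl | hlt
  · simp only [if_pos rfl]
    apply Tendsto.congr' (f₁ := fun _ : ℝ => c)
    · filter_upwards [eventually_gt_atTop (0:ℝ)] with x hx
      rw [mul_div_assoc, div_self (by positivity), mul_one]
    · exact tendsto_const_nhds
  · rw [if_neg (by omega)]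
    have h1 : Tendsto (fun x : ℝ => x ^ (n - j)) atTop atTop :=
      tendsto_pow_atTop (by omega)
    have h2 := h1.inv_tendsto_atTop
    have h3 : Tendsto (fun x : ℝ => c * (x ^ (n - j))⁻¹) atTop (𝓝 (c * 0)) :=
      h2.const_mul c
    rw [mul_zero] at h3
    apply Tendsto.congr' _ h3
    filter_upwards [eventually_gt_atTop (0:ℝ)] with x hx
    rw [show n = j + (n - j) by omega, pow_add]
    field_simp
    ring_nf
    rw [Nat.add_sub_cancel]

lemma tendsto_sum_div_pow (s : Finset ℕ) (c : ℕ → ℝ) (n : ℕ) (hs : ∀ j ∈ s, j ≤ n) :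
    Tendsto (fun x : ℝ => (∑ j ∈ s, c j * x ^ j) / x ^ n) atTop
      (𝓝 (if n ∈ s then c n else 0)) := by
  have h : Tendsto (fun x : ℝ => ∑ j ∈ s, c j * x ^ j / x ^ n) atTop
      (𝓝 (∑ j ∈ s, if j = n then c j else 0)) := by
    apply tendsto_finset_sum
    intro j hj
    exact tendsto_term_div_pow (c j) j n (hs j hj)
  rw [Finset.sum_ite_eq' s n c] at h
  apply h.congr
  intro x
  rw [Finset.sum_div]

lemma tendsto_aa_div (k n : ℕ) (h : k ≤ n) :
    Tendsto (fun x : ℝ => aa k x / x ^ n) atTop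
      (𝓝 (if k = n then ((Nat.factorial n : ℝ))⁻¹ else 0)) := by
  have e : ∀ x : ℝ, aa k x = ∑ j ∈ Finset.range (k+1), ((Nat.factorial j : ℝ))⁻¹ * x ^ j := by
    intro x; unfold aa; apply Finset.sum_congr rfl; intro j _; rw [div_eq_mul_inv]; ring
  have h2 := tendsto_sum_div_pow (Finset.range (k+1)) (fun j => ((Nat.factorial j : ℝ))⁻¹) n
    (fun j hj => by have := Finset.mem_range.1 hj; omega)
  have hiff : (if n ∈ Finset.range (k+1) then ((Nat.factorial n : ℝ))⁻¹ else 0)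
      = (if k = n then ((Nat.factorial n : ℝ))⁻¹ else 0) := by
    by_cases hkn : k = n
    · subst hkn; simp
    · rw [if_neg hkn, if_neg (by simp only [Finset.mem_range]; omega)]
  rw [hiff] at h2
  apply h2.congr
  intro x; rw [e x]

lemma tendsto_bb_div (k n : ℕ) (h : k ≤ n) (hn : 1 ≤ n) :
    Tendsto (fun x : ℝ => bb k x / x ^ n) atTop
      (𝓝 (if k = n then ((n : ℝ) * ((Nat.factorial n : ℝ))⁻¹) else 0)) := by
  have h2 := tendsto_sum_div_pow (Finset.Icc 1 k) (fun j => (j : ℝ) * ((Nat.factorial j : ℝ))⁻¹) n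
    (fun j hj => by have := (Finset.mem_Icc.1 hj).2; omega)
  have hiff : (if n ∈ Finset.Icc 1 k then ((n:ℝ) * ((Nat.factorial n : ℝ))⁻¹) else 0)
      = (if k = n then ((n:ℝ) * ((Nat.factorial n : ℝ))⁻¹) else 0) := by
    by_cases hkn : k = n
    · subst hkn; rw [if_pos (Finset.mem_Icc.2 (by omega)), if_pos rfl]
    · rw [if_neg hkn, if_neg (by simp only [Finset.mem_Icc]; omega)]
  rw [hiff] at h2
  apply h2.congr
  intro x
  unfold bb
  congr 1
  apply Finset.sum_congr rfl
  intro j _; rw [div_eq_mul_inv]; ring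

lemma tendsto_HH (n m : ℕ) (hmn : m < n) : Tendsto (HH n m) atTop (𝓝 (n : ℝ)) := by
  have hn1 : 1 ≤ n := by omega
  have hnum : Tendsto (fun x : ℝ => (bb n x + bb m x) / x ^ n) atTop
      (𝓝 ((n : ℝ) * ((Nat.factorial n : ℝ))⁻¹ + 0)) := by
    have h1 := tendsto_bb_div n n le_rfl hn1
    have h2 := tendsto_bb_div m n (by omega) hn1
    rw [if_pos rfl] at h1
    rw [if_neg (by omega)] at h2
    have := h1.add h2
    apply this.congr
    intro x; rw [← add_div]
  have hden : Tendsto (fun x : ℝ => r3 n m x / x ^ n) atTop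
      (𝓝 (((Nat.factorial n : ℝ))⁻¹ + 0)) := by
    have h1 := tendsto_aa_div n n le_rfl
    have h2 := tendsto_aa_div m n (by omega)
    rw [if_pos rfl] at h1
    rw [if_neg (by omega)] at h2
    have := h1.add h2
    apply this.congr
    intro x; unfold r3; rw [← add_div]
  have hfac : ((Nat.factorial n : ℝ))⁻¹ + 0 ≠ 0 := by
    rw [add_zero]; positivity
  have hdiv := hnum.div hden hfac
  have hval : ((n : ℝ) * ((Nat.factorial n : ℝ))⁻¹ + 0) / (((Nat.factorial n : ℝ))⁻¹ + 0)
      = (n : ℝ) := by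
    rw [add_zero, add_zero]
    field_simp
  rw [hval] at hdiv
  apply hdiv.congr'
  filter_upwards [eventually_gt_atTop (0:ℝ)] with x hx
  have hxn : x ^ n ≠ 0 := by positivity
  unfold HH
  rw [Pi.div_apply, div_div_div_cancel_right₀ hxn]

lemma integrableOn_HD (n m : ℕ) (hmn : m < n) : IntegrableOn (HD n m) (Ioi 0) volume :=
  integrableOn_Ioi_deriv_of_nonneg' (fun x hx => hasDerivAt_HH n m hx)
    (fun _ hx => HD_nonneg n m hx) (tendsto_HH n m hmn)

lemma integral_HD (n m : ℕ) (hmn : m < n) : ∫ x in Ioi 0, HD n m x = n := by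
  rw [integral_Ioi_of_hasDerivAt_of_nonneg' (fun x hx => hasDerivAt_HH n m hx)
    (fun _ hx => HD_nonneg n m hx) (tendsto_HH n m hmn), HH_zero, sub_zero]

end Aux

section Aux2


lemma key_bounds (a b c R x : ℝ) (hx : 0 < x) (ha : 0 ≤ a) (hb : 0 ≤ b) (hc : 0 ≤ c)
    (hcs : c ^ 2 ≤ a * b) (hR : 0 < R) :
    (0 ≤ (1/x) * ((a^2 + b^2 - 2*c^2) / (R^2 * Real.sqrt ((a+b)^2 - 4*c^2)))) ∧
    ((1/x) * ((a^2 + b^2 - 2*c^2) / (R^2 * Real.sqrt ((a+b)^2 - 4*c^2)))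
      ≤ (a + b - 2*c) / (x * R^2) + 2*c / (x * R^2)) ∧
    ((a + b - 2*c) / (x * R^2) - 2*b / (x * R^2)
      ≤ (1/x) * ((a^2 + b^2 - 2*c^2) / (R^2 * Real.sqrt ((a+b)^2 - 4*c^2)))) := by
  set S := Real.sqrt ((a+b)^2 - 4*c^2) with hSdef
  have harg : 0 ≤ (a+b)^2 - 4*c^2 := by nlinarith [sq_nonneg (a - b)]
  have hS0 : 0 ≤ S := Real.sqrt_nonneg _
  have hS2 : S ^ 2 = (a+b)^2 - 4*c^2 := Real.sq_sqrt harg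
  have hN0 : 0 ≤ a^2 + b^2 - 2*c^2 := by nlinarith [sq_nonneg (a - b)]
  have hE0 : 0 ≤ (1/x) * ((a^2 + b^2 - 2*c^2) / (R^2 * S)) := by
    apply mul_nonneg (by positivity)
    apply div_nonneg hN0 (by positivity)
  refine ⟨hE0, ?_, ?_⟩
  · -- upper bound
    have hsum : (a + b - 2*c) / (x * R^2) + 2*c / (x * R^2) = (a + b) / (x * R^2) := by
      rw [← add_div]; ring_nf
    rw [hsum]
    rcases eq_or_lt_of_le hS0 with hS | hS
    · rw [← hS, mul_zero, div_zero, mul_zero]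
      positivity
    · have hSle : S ≤ a + b := by nlinarith
      have hNle : a^2 + b^2 - 2*c^2 ≤ S * (a + b) := by nlinarith
      rw [one_div, inv_mul_eq_div, div_div]
      rw [div_le_div_iff₀ (by positivity) (by positivity)]
      have : 0 < x * (R^2 * S) := by positivity
      nlinarith [mul_le_mul_of_nonneg_right hNle (le_of_lt (mul_pos hx (mul_pos (pow_pos hR 2) hS)))]
  · -- lower bound
    have hsub : (a + b - 2*c) / (x * R^2) - 2*b / (x * R^2) = (a - b - 2*c) / (x * R^2) := by
      rw [div_sub_div_same]; ring_nf
    rw [hsub]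
    rcases le_or_gt (a - b - 2*c) 0 with ht | ht
    · exact le_trans (div_nonpos_of_nonpos_of_nonneg ht (by positivity)) hE0
    · rcases eq_or_lt_of_le hS0 with hS | hS
      · -- S = 0 forces a + b = 2c, contradicting t > 0
        exfalso
        have : (a+b)^2 - 4*c^2 = 0 := by
          by_contra hne
          have : 0 < (a+b)^2 - 4*c^2 := lt_of_le_of_ne harg (Ne.symm hne)
          have := Real.sqrt_pos.2 this
          rw [← hSdef] at this; linarith
        nlinarith
      · have hSlev : S ≤ a + b + 2*c := by nlinarith
        have hkey : (a - b - 2*c) * S ≤ a^2 + b^2 - 2*c^2 := by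
          have h1 : (a - b - 2*c) * S ≤ (a - b - 2*c) * (a + b + 2*c) :=
            mul_le_mul_of_nonneg_left hSlev ht.le
          nlinarith [sq_nonneg (b + c)]
        rw [one_div, inv_mul_eq_div, div_div]
        rw [div_le_div_iff₀ (by positivity) (by positivity)]
        nlinarith [mul_le_mul_of_nonneg_right hkey (le_of_lt (mul_pos hx (pow_pos hR 2)))]

variable (n m : ℕ)

lemma gg_bounds (n m : ℕ) {x : ℝ} (hx : 0 < x) :
    0 ≤ gg n m x ∧
    gg n m x ≤ HD n m x + 2 * r12 n m x / (x * (r3 n m x) ^ 2) ∧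
    HD n m x - 2 * r2 n m x / (x * (r3 n m x) ^ 2) ≤ gg n m x := by
  have h := key_bounds (r1 n m x) (r2 n m x) (r12 n m x) (r3 n m x) x hx
    (r1_nonneg n m hx.le) (r2_nonneg n m hx.le) (r12_nonneg n m hx.le)
    (r12_sq_le n m hx.le) (r3_pos n m hx.le)
  obtain ⟨h0, hup, hlo⟩ := h
  have hgg : gg n m x = (1/x) * ((r1 n m x ^ 2 + r2 n m x ^ 2 - 2 * r12 n m x ^ 2) /
      ((r3 n m x) ^ 2 * Real.sqrt ((r1 n m x + r2 n m x) ^ 2 - 4 * r12 n m x ^ 2))) := rfl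
  have hHD := HD_eq n m hx
  refine ⟨by rw [hgg]; exact h0, ?_, ?_⟩
  · rw [hgg, hHD]
    convert hup using 2
  · rw [hgg, hHD]
    convert hlo using 2

/-- coefficient constant -/
noncomputable def Dm (m : ℕ) : ℝ := ∑ j ∈ Finset.Icc 1 m, (j : ℝ) ^ 2 / (Nat.factorial j)

lemma Dm_nonneg (m : ℕ) : 0 ≤ Dm m :=
  Finset.sum_nonneg fun j _ => div_nonneg (by positivity) (by positivity)

lemma pow_le_one_add (m j : ℕ) {x : ℝ} (hx : 0 ≤ x) (hjm : j ≤ m) : x ^ j ≤ (1 + x) ^ m := by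
  calc x ^ j ≤ (1 + x) ^ j := pow_le_pow_left₀ hx (by linarith) j
  _ ≤ (1 + x) ^ m := pow_le_pow_right₀ (by linarith) hjm

lemma bb_le_Dm (m : ℕ) {x : ℝ} (hx : 0 ≤ x) : bb m x ≤ Dm m * (1 + x) ^ m := by
  unfold bb Dm
  rw [Finset.sum_mul]
  apply Finset.sum_le_sum
  intro j hj
  obtain ⟨hj1, hjm⟩ := Finset.mem_Icc.1 hj
  have hj1' : (1:ℝ) ≤ (j:ℝ) := by exact_mod_cast hj1
  have hxj : x ^ j ≤ (1 + x) ^ m := pow_le_one_add m j hx hjm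
  calc (j:ℝ) * x ^ j / (Nat.factorial j : ℝ)
      ≤ (j:ℝ) ^ 2 * (1 + x) ^ m / (Nat.factorial j : ℝ) := by
        gcongr ?_ / _
        apply mul_le_mul (by nlinarith) hxj (pow_nonneg hx j) (by positivity)
  _ = (j:ℝ) ^ 2 / (Nat.factorial j : ℝ) * (1 + x) ^ m := by ring

lemma ccx_le_Dm (m : ℕ) {x : ℝ} (hx : 0 ≤ x) : ccx m x ≤ Dm m * (1 + x) ^ m := by
  unfold ccx Dm
  rw [Finset.sum_mul]
  apply Finset.sum_le_sum
  intro j hj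
  obtain ⟨hj1, hjm⟩ := Finset.mem_Icc.1 hj
  have hxj : x ^ (j - 1) ≤ (1 + x) ^ m := pow_le_one_add m (j-1) hx (by omega)
  calc (j:ℝ) ^ 2 * x ^ (j-1) / (Nat.factorial j : ℝ)
      ≤ (j:ℝ) ^ 2 * (1 + x) ^ m / (Nat.factorial j : ℝ) := by
        gcongr
  _ = (j:ℝ) ^ 2 / (Nat.factorial j : ℝ) * (1 + x) ^ m := by ring


lemma aa_ge_pow (k : ℕ) {x : ℝ} (hx : 0 ≤ x) : x ^ k / (Nat.factorial k : ℝ) ≤ aa k x := by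
  unfold aa
  apply Finset.single_le_sum (f := fun j => x ^ j / (Nat.factorial j : ℝ))
    (fun j _ => div_nonneg (pow_nonneg hx j) (by positivity))
  simp

noncomputable def psi (m : ℕ) (x : ℝ) : ℝ := 4 * Dm m * (1 + x) ^ m / aa (m + 2) x

lemma continuous_aa (k : ℕ) : Continuous (aa k) :=
  continuous_finset_sum _ fun j _ => (continuous_pow j).div_const _

lemma psi_nonneg (m : ℕ) {x : ℝ} (hx : 0 ≤ x) : 0 ≤ psi m x := by
  unfold psi
  have := Dm_nonneg m
  have := aa_pos (m+2) hx
  positivity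

lemma measurable_psi (m : ℕ) : Measurable (psi m) := by
  unfold psi
  exact (((continuous_const.mul
    ((continuous_const.add continuous_id).pow m)).measurable)).div (continuous_aa (m+2)).measurable

lemma integrableOn_psi (m : ℕ) : IntegrableOn (psi m) (Ioi (0:ℝ)) := by
  rw [← Ioc_union_Ioi_eq_Ioi (zero_le_one (α := ℝ))]
  apply IntegrableOn.union
  · -- on Ioc 0 1 : continuous on Icc 0 1
    have hcont : ContinuousOn (psi m) (Icc 0 1) := by
      apply ContinuousOn.div
      · exact (continuous_const.mul ((continuous_const.add continuous_id).pow m)).continuousOn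
      · exact (continuous_aa (m+2)).continuousOn
      · exact fun x hx => (aa_pos (m+2) hx.1).ne'
    exact (hcont.integrableOn_Icc).mono_set Ioc_subset_Icc_self
  · -- on Ioi 1 : dominated by K x⁻²
    set K : ℝ := 4 * Dm m * 2 ^ m * (Nat.factorial (m+2)) with hK
    have hK0 : 0 ≤ K := by have := Dm_nonneg m; positivity
    have hdom : Integrable (fun x : ℝ => K * x ^ (-2 : ℝ)) (volume.restrict (Ioi 1)) :=
      (integrableOn_Ioi_rpow_of_lt (by norm_num) one_pos).const_mul K
    apply hdom.mono' ((measurable_psi m).aestronglyMeasurable)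
    rw [ae_restrict_iff' measurableSet_Ioi]
    apply ae_of_all
    intro x hx
    have hx1 : (1:ℝ) < x := hx
    have hx0 : (0:ℝ) < x := lt_trans one_pos hx1
    rw [Real.norm_of_nonneg (psi_nonneg m hx0.le)]
    have h1 : (1 + x) ^ m ≤ (2*x) ^ m := pow_le_pow_left₀ (by linarith) (by linarith) m
    have h2 : x ^ (m+2) / (Nat.factorial (m+2) : ℝ) ≤ aa (m+2) x := aa_ge_pow (m+2) hx0.le
    have h3 : psi m x ≤ (4 * Dm m * (2*x) ^ m) / (x ^ (m+2) / (Nat.factorial (m+2) : ℝ)) := by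
      unfold psi
      apply div_le_div₀ (by have := Dm_nonneg m; positivity)
        (by have := Dm_nonneg m; nlinarith [Dm_nonneg m]) (by positivity) h2
    have hrp : x ^ (-2:ℝ) = (x ^ (2:ℕ))⁻¹ := by
      rw [Real.rpow_neg hx0.le, show ((2:ℝ)) = ((2:ℕ):ℝ) by norm_num, Real.rpow_natCast]
    rw [hrp]
    refine le_trans h3 (le_of_eq ?_)
    field_simp
    ring

lemma err1_le_psi (n m : ℕ) (hnm : m + 2 ≤ n) {x : ℝ} (hx : 0 < x) :
    2 * r2 n m x / (x * (r3 n m x) ^ 2) ≤ psi m x := by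
  have hQ : 0 < aa (m+2) x := aa_pos _ hx.le
  have hQR : aa (m+2) x ≤ r3 n m x := by
    have h1 := aa_mono_k hnm hx.le
    have h2 := aa_pos m hx.le
    unfold r3; linarith
  have hR := r3_pos n m hx.le
  have hcc : cc m x = x * ccx m x := cc_eq_mul m x
  have hccx : 0 ≤ ccx m x := by
    have := cc_nonneg m hx.le
    nlinarith
  have hr2 : r2 n m x ≤ r3 n m x * cc m x := by
    unfold r2; nlinarith [sq_nonneg (bb m x)]
  have step1 : 2 * r2 n m x / (x * (r3 n m x) ^ 2) ≤ 2 * ccx m x / r3 n m x := by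
    rw [div_le_div_iff₀ (by positivity) (by positivity)]
    nlinarith [mul_le_mul_of_nonneg_right hr2 hR.le]
  have step2 : 2 * ccx m x / r3 n m x ≤ psi m x := by
    unfold psi
    calc 2 * ccx m x / r3 n m x
        ≤ 2 * (Dm m * (1+x) ^ m) / aa (m+2) x := by
          apply div_le_div₀ (by have := Dm_nonneg m; positivity)
            (by have := ccx_le_Dm m hx.le; linarith) hQ hQR
    _ ≤ 4 * Dm m * (1+x) ^ m / aa (m+2) x := by
          apply div_le_div₀ (by have := Dm_nonneg m; positivity)
            (by nlinarith [Dm_nonneg m, pow_nonneg (by linarith : (0:ℝ) ≤ 1 + x) m]) hQ le_rfl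
  linarith

lemma err2_le_psi (n m : ℕ) (hnm : m + 2 ≤ n) {x : ℝ} (hx : 0 < x) :
    2 * r12 n m x / (x * (r3 n m x) ^ 2) ≤ psi m x := by
  have hQ : 0 < aa (m+2) x := aa_pos _ hx.le
  have hQR : aa (m+2) x ≤ r3 n m x := by
    have h1 := aa_mono_k hnm hx.le
    have h2 := aa_pos m hx.le
    unfold r3; linarith
  have hR := r3_pos n m hx.le
  have hA : bbx n x = aa (n-1) x := by
    have hn : n - 1 + 1 = n := by omega
    conv_lhs => rw [← hn]
    rw [bbx_eq_aa]
  have hAR : bbx n x ≤ r3 n m x := by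
    rw [hA]
    have h1 := aa_mono_k (show n - 1 ≤ n by omega) (le_of_lt hx)
    have h2 := aa_pos m hx.le
    unfold r3; linarith
  have hA0 : 0 ≤ bbx n x := by rw [hA]; exact (aa_pos _ hx.le).le
  have hbm : 0 ≤ bb m x := bb_nonneg m hx.le
  have hr12 : r12 n m x = x * bbx n x * bb m x := by
    unfold r12; rw [bb_eq_mul n x]
  have step1 : 2 * r12 n m x / (x * (r3 n m x) ^ 2) ≤ 2 * bb m x / r3 n m x := by
    rw [div_le_div_iff₀ (by positivity) (by positivity)]
    rw [hr12]
    nlinarith [mul_le_mul_of_nonneg_right (mul_le_mul_of_nonneg_left hAR hbm)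
      (mul_nonneg hx.le hR.le)]
  have step2 : 2 * bb m x / r3 n m x ≤ psi m x := by
    unfold psi
    calc 2 * bb m x / r3 n m x
        ≤ 2 * (Dm m * (1+x) ^ m) / aa (m+2) x := by
          apply div_le_div₀ (by have := Dm_nonneg m; positivity)
            (by have := bb_le_Dm m hx.le; linarith) hQ hQR
    _ ≤ 4 * Dm m * (1+x) ^ m / aa (m+2) x := by
          apply div_le_div₀ (by have := Dm_nonneg m; positivity)
            (by nlinarith [Dm_nonneg m, pow_nonneg (by linarith : (0:ℝ) ≤ 1 + x) m]) hQ le_rfl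
  linarith

lemma gg_squeeze (n m : ℕ) (hnm : m + 2 ≤ n) {x : ℝ} (hx : 0 < x) :
    HD n m x - psi m x ≤ gg n m x ∧ gg n m x ≤ HD n m x + psi m x := by
  obtain ⟨h0, hup, hlo⟩ := gg_bounds n m hx
  constructor
  · have := err1_le_psi n m hnm hx; linarith
  · have := err2_le_psi n m hnm hx; linarith

lemma measurable_gg (n m : ℕ) : Measurable (gg n m) := by
  have haan : Continuous (aa n) := continuous_aa n
  have cbb : ∀ k, Continuous (bb k) := fun k =>
    continuous_finset_sum _ fun j _ => ((continuous_const.mul (continuous_pow j)).div_const _)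
  have ccc : ∀ k, Continuous (cc k) := fun k =>
    continuous_finset_sum _ fun j _ => ((continuous_const.mul (continuous_pow j)).div_const _)
  have cr3 : Continuous (r3 n m) := (continuous_aa n).add (continuous_aa m)
  have cr12 : Continuous (r12 n m) := (cbb n).mul (cbb m)
  have cr1 : Continuous (r1 n m) := (cr3.mul (ccc n)).sub ((cbb n).pow 2)
  have cr2 : Continuous (r2 n m) := (cr3.mul (ccc m)).sub ((cbb m).pow 2)
  unfold gg
  apply Measurable.mul
  · exact measurable_const.div measurable_id
  · apply Measurable.div
    · exact (((cr1.pow 2).add (cr2.pow 2)).sub (continuous_const.mul (cr12.pow 2))).measurable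
    · exact ((cr3.pow 2).mul (Real.continuous_sqrt.comp
        (((cr1.add cr2).pow 2).sub (continuous_const.mul (cr12.pow 2))))).measurable

lemma integrableOn_gg (n m : ℕ) (hnm : m + 2 ≤ n) : IntegrableOn (gg n m) (Ioi (0:ℝ)) := by
  have hHD := integrableOn_HD n m (by omega)
  have hpsi := integrableOn_psi m
  apply (hHD.add hpsi).mono' (measurable_gg n m).aestronglyMeasurable
  rw [ae_restrict_iff' measurableSet_Ioi]
  apply ae_of_all
  intro x hx
  have hx0 : (0:ℝ) < x := hx
  obtain ⟨hlo, hup⟩ := gg_squeeze n m hnm hx0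
  obtain ⟨h0, _, _⟩ := gg_bounds n m hx0
  rw [Real.norm_of_nonneg h0]
  exact hup

lemma integral_gg_bounds (n m : ℕ) (hnm : m + 2 ≤ n) :
    (n : ℝ) - (∫ x in Ioi (0:ℝ), psi m x) ≤ ∫ x in Ioi (0:ℝ), gg n m x ∧
    (∫ x in Ioi (0:ℝ), gg n m x) ≤ (n : ℝ) + ∫ x in Ioi (0:ℝ), psi m x := by
  have hHD := integrableOn_HD n m (by omega)
  have hpsi := integrableOn_psi m
  have hgg := integrableOn_gg n m hnm
  constructor
  · have hmono : ∫ x in Ioi (0:ℝ), (HD n m x - psi m x) ≤ ∫ x in Ioi (0:ℝ), gg n m x := by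
      apply setIntegral_mono_on (hHD.sub hpsi) hgg measurableSet_Ioi
      intro x hx
      exact (gg_squeeze n m hnm hx).1
    rw [integral_sub hHD hpsi, integral_HD n m (by omega)] at hmono
    linarith
  · have hmono : ∫ x in Ioi (0:ℝ), gg n m x ≤ ∫ x in Ioi (0:ℝ), (HD n m x + psi m x) := by
      apply setIntegral_mono_on hgg (hHD.add hpsi) measurableSet_Ioi
      intro x hx
      exact (gg_squeeze n m hnm hx).2
    rw [integral_add hHD hpsi, integral_HD n m (by omega)] at hmono
    linarith

-- polar reduction test
lemma polar_test (g : ℝ → ℝ) :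
    ∫ z : ℂ, g (‖z‖ ^ 2) = Real.pi * ∫ x in Ioi (0:ℝ), g x := by
  have key := MeasureTheory.integral_fun_norm_addHaar (volume : Measure ℂ)
    (fun r : ℝ => g (r ^ 2))
  simp only [Complex.finrank_real_complex] at key
  have hball : volume.real (Metric.ball (0:ℂ) 1) = Real.pi := by
    rw [measureReal_def, Complex.volume_ball]
    simp [ENNReal.toReal_mul]
  rw [hball] at key
  have hsub : ∫ y in Ioi (0:ℝ), y ^ (2 - 1) • g (y ^ 2) = (1/2) * ∫ x in Ioi (0:ℝ), g x := by
    have h2 := integral_comp_rpow_Ioi g (p := 2) two_ne_zero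
    have congr1 : ∫ x in Ioi (0:ℝ), (|(2:ℝ)| * x ^ ((2:ℝ) - 1)) • g (x ^ (2:ℝ))
        = ∫ x in Ioi (0:ℝ), 2 * (x ^ (2 - 1) • g (x ^ 2)) := by
      apply setIntegral_congr_fun measurableSet_Ioi
      intro x hx
      have hx0 : (0:ℝ) < x := hx
      have e1 : x ^ ((2:ℝ) - 1) = x := by
        rw [show ((2:ℝ) - 1) = (1:ℝ) by norm_num, Real.rpow_one]
      have e2 : x ^ ((2:ℝ)) = x ^ (2:ℕ) := by
        rw [show ((2:ℝ)) = ((2:ℕ):ℝ) by norm_num, Real.rpow_natCast]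
      show (|(2:ℝ)| * x ^ ((2:ℝ) - 1)) • g (x ^ (2:ℝ)) = 2 * (x ^ (2 - 1) • g (x ^ 2))
      rw [e1, e2]
      norm_num [smul_eq_mul]
      ring
    rw [congr1] at h2
    rw [integral_const_mul] at h2
    have : ∫ x in Ioi (0:ℝ), x ^ (2-1) • g (x ^ 2) = (∫ x in Ioi (0:ℝ), g x) / 2 := by
      linarith
    rw [this]; ring
  rw [hsub] at key
  rw [key]
  simp [smul_eq_mul]
  ring

lemma I_eq_integral_gg (n m : ℕ) : I n m = ∫ x in Ioi (0:ℝ), gg n m x := by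
  unfold I
  have h0 : ∫ z : ℂ, F n m z = ∫ z : ℂ, gg n m (‖z‖ ^ 2) := rfl
  rw [h0, polar_test (gg n m)]
  have := Real.pi_ne_zero
  field_simp

end Aux2

theorem weyl_intensity_fixed_m (m : ℕ) :
    Tendsto (fun n : ℕ => I n m / (n : ℝ)) atTop (nhds 1) := by
  set C : ℝ := ∫ x in Ioi (0:ℝ), psi m x with hC
  have hCdiv : Tendsto (fun n : ℕ => C / (n : ℝ)) atTop (𝓝 0) :=
    Tendsto.div_atTop tendsto_const_nhds tendsto_natCast_atTop_atTop
  have hone : Tendsto (fun _ : ℕ => (1:ℝ)) atTop (𝓝 1) := tendsto_const_nhds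
  have hlo : Tendsto (fun n : ℕ => 1 - C / (n : ℝ)) atTop (𝓝 1) := by
    have := hone.sub hCdiv
    simpa using this
  have hhi : Tendsto (fun n : ℕ => 1 + C / (n : ℝ)) atTop (𝓝 1) := by
    have := hone.add hCdiv
    simpa using this
  apply tendsto_of_tendsto_of_tendsto_of_le_of_le' hlo hhi
  · filter_upwards [eventually_ge_atTop (m + 2)] with n hn
    have hn0 : (0:ℝ) < (n:ℝ) := by
      have : 0 < n := by omega
      exact_mod_cast this
    obtain ⟨h1, h2⟩ := integral_gg_bounds n m hn
    rw [I_eq_integral_gg]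
    have : ((n:ℝ) - C) / (n:ℝ) ≤ (∫ x in Ioi (0:ℝ), gg n m x) / (n:ℝ) := by
      gcongr
    calc 1 - C / (n:ℝ) = ((n:ℝ) - C) / (n:ℝ) := by field_simp
    _ ≤ _ := this
  · filter_upwards [eventually_ge_atTop (m + 2)] with n hn
    have hn0 : (0:ℝ) < (n:ℝ) := by
      have : 0 < n := by omega
      exact_mod_cast this
    obtain ⟨h1, h2⟩ := integral_gg_bounds n m hn
    rw [I_eq_integral_gg]
    have : (∫ x in Ioi (0:ℝ), gg n m x) / (n:ℝ) ≤ ((n:ℝ) + C) / (n:ℝ) := by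
      gcongr
    calc (∫ x in Ioi (0:ℝ), gg n m x) / (n:ℝ) ≤ ((n:ℝ) + C) / (n:ℝ) := this
    _ = 1 + C / (n:ℝ) := by field_simp
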